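/- Let (s_n) be a sequence of non-negative real numbers with s_n ≤ d for all n, where d ∈ ℕ∖{0}, and suppose that for all n ∈ ℕ, s_{n+1} ≤ (1−α_n) s_n + α_n r_n + γ_n, where (α_n) ⊂ [0,1], (r_n) is a sequence of real numbers and (γ_n) ⊂ [0,∞). Assume there exist functions A, R, G : ℕ → ℕ such that for all k ∈ ℕ: (i) Σ_{i=1}^{A(k)} α_i ≥ k; (ii) r_n ≤ 1/(k+1) for all n ≥ R(k); (iii) Σ_{i=G(k)+1}^{G(k)+n} γ_i ≤ 1/(k+1) for all n ∈ ℕ. Then for every k ∈ ℕ and every n ≥ θ(k) one has s_n ≤ 1/(k+1), where θ(k) := A(M − 1 + ⌈ln(3d(k+1))⌉) + 1 and M := max{R(3k+2), G(3k+2)+1}. -/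

import Mathlib

open Finset Real

private lemma aux_rec (s α r γ : ℕ → ℝ) (B : ℝ) (hB : 0 ≤ B)
    (hα : ∀ i, α i ∈ Set.Icc (0:ℝ) 1)
    (hγ0 : ∀ i, 0 ≤ γ i)
    (hrec : ∀ i, s (i + 1) ≤ (1 - α i) * s i + α i * r i + γ i)
    (m : ℕ) (hr : ∀ i, m ≤ i → r i ≤ B) :
    ∀ n, m ≤ n →
      s n ≤ (∏ i ∈ Finset.Ico m n, (1 - α i)) * s m
        + B * (1 - ∏ i ∈ Finset.Ico m n, (1 - α i))
        + ∑ i ∈ Finset.Ico m n, γ i := by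
  intro n hn
  induction n, hn using Nat.le_induction with
  | base => simp
  | succ n hmn ih =>
    have hαn := hα n
    rw [Finset.prod_Ico_succ_top hmn, Finset.sum_Ico_succ_top hmn]
    have hP0 : 0 ≤ ∏ i ∈ Finset.Ico m n, (1 - α i) :=
      Finset.prod_nonneg fun i _ => by linarith [(hα i).2]
    have hΓ0 : 0 ≤ ∑ i ∈ Finset.Ico m n, γ i := Finset.sum_nonneg fun i _ => hγ0 i
    have hrn := hr n hmn
    have h1 := hrec n
    have h2 := mul_le_mul_of_nonneg_left ih (by linarith [hαn.2] : (0:ℝ) ≤ 1 - α n)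
    have h3 : 0 ≤ α n * (B - r n) := mul_nonneg hαn.1 (by linarith)
    have h4 : 0 ≤ α n * ∑ i ∈ Finset.Ico m n, γ i := mul_nonneg hαn.1 hΓ0
    nlinarith [hαn.1, hαn.2]

/-- quantitative Xu-type lemma. -/
theorem quantitative_lemma_LLPP
    (d : ℕ) (hd : 0 < d)
    (s α r γ : ℕ → ℝ)
    (hs : ∀ n, 0 ≤ s n) (hsd : ∀ n, s n ≤ d)
    (hα : ∀ n, α n ∈ Set.Icc (0 : ℝ) 1)
    (hγ : ∀ n, 0 ≤ γ n)
    (hrec : ∀ n, s (n + 1) ≤ (1 - α n) * s n + α n * r n + γ n)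
    (A R G : ℕ → ℕ)
    (hA : ∀ k : ℕ, (k : ℝ) ≤ ∑ i ∈ Finset.Icc 1 (A k), α i)
    (hR : ∀ k n, R k ≤ n → r n ≤ 1 / (k + 1))
    (hG : ∀ k n, ∑ i ∈ Finset.Icc (G k + 1) (G k + n), γ i ≤ 1 / (k + 1)) :
    ∀ k n,
      A (max (R (3 * k + 2)) (G (3 * k + 2) + 1) - 1
          + Nat.ceil (Real.log (3 * (d : ℝ) * (k + 1)))) + 1 ≤ n →
      s n ≤ 1 / (k + 1) := by
  intro k n hn
  set K := 3 * k + 2 with hKdef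
  set M := max (R K) (G K + 1) with hMdef
  set C := Nat.ceil (Real.log (3 * (d : ℝ) * (k + 1))) with hCdef
  set T := A (M - 1 + C) with hTdef
  have hα0 : ∀ i, 0 ≤ α i := fun i => (hα i).1
  have hα1 : ∀ i, α i ≤ 1 := fun i => (hα i).2
  have hd1 : (1:ℝ) ≤ d := by exact_mod_cast hd
  have hk1 : (0:ℝ) < (k:ℝ) + 1 := by positivity
  have hxpos : (1:ℝ) < 3 * (d : ℝ) * (k + 1) := by nlinarith
  have hlogpos : 0 < Real.log (3 * (d : ℝ) * (k + 1)) := Real.log_pos hxpos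
  have hC1 : 1 ≤ C := by
    rw [hCdef]
    exact Nat.one_le_ceil_iff.mpr hlogpos
  have hM1 : 1 ≤ M := le_trans (by omega) (le_max_right (R K) (G K + 1))
  -- T ≥ M - 1 + C
  have hTsum : ((M - 1 + C : ℕ) : ℝ) ≤ ∑ i ∈ Finset.Icc 1 T, α i := hA _
  have hTcard : ∑ i ∈ Finset.Icc 1 T, α i ≤ (T : ℝ) := by
    calc ∑ i ∈ Finset.Icc 1 T, α i ≤ ∑ i ∈ Finset.Icc 1 T, (1:ℝ) :=
          Finset.sum_le_sum fun i _ => hα1 i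
      _ = (T : ℝ) := by simp
  have hTge : M - 1 + C ≤ T := by exact_mod_cast hTsum.trans hTcard
  have hMn : M + C ≤ n := by omega
  have hMltn : M < n := by omega
  obtain ⟨N, rfl⟩ : ∃ N, n = N + 1 := ⟨n - 1, by omega⟩
  have hMN : M ≤ N := by omega
  have hTN : T ≤ N := by omega
  -- sum of α over Ico M (N+1) is at least C ≥ log(3d(k+1))
  have hIcc : ∀ x : ℕ, Finset.Icc 1 x = Finset.Ioc 0 x := fun x => by
    rw [← Finset.Icc_add_one_left_eq_Ioc, zero_add]
  have hsplit : ∑ i ∈ Finset.Ioc 0 (M-1), α i + ∑ i ∈ Finset.Ioc (M-1) N, α i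
      = ∑ i ∈ Finset.Ioc 0 N, α i :=
    Finset.sum_Ioc_consecutive _ (by omega) (by omega)
  have hIocIco : Finset.Ioc (M-1) N = Finset.Ico M (N+1) := by
    ext i; simp only [Finset.mem_Ioc, Finset.mem_Ico]; omega
  have h1 : ∑ i ∈ Finset.Ioc 0 (M-1), α i ≤ ((M - 1 : ℕ) : ℝ) := by
    calc ∑ i ∈ Finset.Ioc 0 (M-1), α i ≤ ∑ i ∈ Finset.Ioc 0 (M-1), (1:ℝ) :=
          Finset.sum_le_sum fun i _ => hα1 i
      _ = ((M - 1 : ℕ) : ℝ) := by simp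
  have h2 : ((M - 1 + C : ℕ) : ℝ) ≤ ∑ i ∈ Finset.Ioc 0 N, α i := by
    refine hTsum.trans ?_
    rw [hIcc]
    exact Finset.sum_le_sum_of_subset_of_nonneg
      (Finset.Ioc_subset_Ioc le_rfl hTN) (fun i _ _ => hα0 i)
  have hS : Real.log (3 * (d : ℝ) * (k + 1)) ≤ ∑ i ∈ Finset.Ico M (N+1), α i := by
    have hCle : Real.log (3 * (d : ℝ) * (k + 1)) ≤ (C : ℝ) := Nat.le_ceil _
    have : ((M - 1 + C : ℕ) : ℝ) = ((M-1:ℕ):ℝ) + (C:ℝ) := by push_cast; ring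
    rw [← hIocIco]
    linarith [hsplit]
  -- apply the recursion lemma
  set B : ℝ := 1 / ((K:ℝ) + 1) with hBdef
  have hK3 : ((K:ℝ) + 1) = 3 * ((k:ℝ) + 1) := by rw [hKdef]; push_cast; ring
  have hB0 : 0 ≤ B := by rw [hBdef]; positivity
  have hr' : ∀ i, M ≤ i → r i ≤ B := fun i hi =>
    hR K i (le_trans (le_max_left _ _) hi)
  have hmain := aux_rec s α r γ B hB0 hα hγ hrec M hr' (N+1) (by omega)
  set P := ∏ i ∈ Finset.Ico M (N+1), (1 - α i) with hPdef
  have hP0 : 0 ≤ P := Finset.prod_nonneg fun i _ => by linarith [hα1 i]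
  -- bound P
  have hPexp : P ≤ Real.exp (-(∑ i ∈ Finset.Ico M (N+1), α i)) := by
    rw [hPdef]
    calc ∏ i ∈ Finset.Ico M (N+1), (1 - α i)
        ≤ ∏ i ∈ Finset.Ico M (N+1), Real.exp (-(α i)) := by
          refine Finset.prod_le_prod (fun i _ => by linarith [hα1 i]) (fun i _ => ?_)
          have := Real.add_one_le_exp (-(α i))
          linarith
      _ = Real.exp (∑ i ∈ Finset.Ico M (N+1), -(α i)) := (Real.exp_sum _ _).symm
      _ = Real.exp (-(∑ i ∈ Finset.Ico M (N+1), α i)) := by rw [Finset.sum_neg_distrib]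
  have hPle : P ≤ 1 / (3 * (d:ℝ) * ((k:ℝ) + 1)) := by
    refine hPexp.trans ?_
    rw [← Real.exp_log (by positivity : (0:ℝ) < 1 / (3 * (d:ℝ) * ((k:ℝ)+1)))]
    apply Real.exp_le_exp.mpr
    rw [Real.log_div (by norm_num) (by positivity), Real.log_one]
    linarith
  have hPsM : P * s M ≤ 1 / (3 * ((k:ℝ) + 1)) := by
    have : P * s M ≤ (1 / (3 * (d:ℝ) * ((k:ℝ)+1))) * (d:ℝ) :=
      mul_le_mul hPle (hsd M) (hs M) (by positivity)
    calc P * s M ≤ (1 / (3 * (d:ℝ) * ((k:ℝ)+1))) * (d:ℝ) := this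
      _ = 1 / (3 * ((k:ℝ) + 1)) := by field_simp
  -- bound gamma sum
  have hΓ : ∑ i ∈ Finset.Ico M (N+1), γ i ≤ B := by
    rw [hBdef]
    refine le_trans ?_ (hG K (N+1))
    refine Finset.sum_le_sum_of_subset_of_nonneg ?_ (fun i _ _ => hγ i)
    intro i hi
    simp only [Finset.mem_Ico, Finset.mem_Icc] at hi ⊢
    constructor
    · have := le_max_right (R K) (G K + 1); omega
    · omega
  have hBP : B * (1 - P) ≤ B := by nlinarith
  have hBval : B = 1 / (3 * ((k:ℝ) + 1)) := by rw [hBdef, hK3]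
  rw [hBval] at hΓ hBP
  have hfin : (3:ℝ) * (1 / (3 * ((k:ℝ) + 1))) = 1 / ((k:ℝ)+1) := by
    field_simp
  have : s (N+1) ≤ P * s M + B * (1 - P) + ∑ i ∈ Finset.Ico M (N+1), γ i := hmain
  rw [hBval] at this
  -- conclude
  linarith
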